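/- Let α ∈ (1,2) and for each integer n ≥ 0 set m_n = (α+1)^{n/(1-α)} · Γ(α/(α+1)) · Γ(1 + (α+1)n/(α-1)) / ( Γ(α/(α+1) + n/(α-1)) · Γ(1 + n/(α-1)) ). Then (m_n)^{1/n} / n → (α+1)^{α/(α-1)} / ( e·(α-1) ) as n → ∞. (These m_n are the positive integer moments of 𝒳_α = 𝒜_α^{1/(1-α)}; the limit, via the Davies–Kasahara theorem, gives the exponential decay rate of P[𝒳_α > x].) -/

import Mathlib

open Filter

open Real


lemma logfact_lb (n : ℕ) (hn : 1 ≤ n) :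
    (n:ℝ) * Real.log n - n ≤ Real.log (n.factorial) := by
  induction n with
  | zero => omega
  | succ m ih =>
    rcases Nat.eq_or_lt_of_le hn with h | h
    · simp [← h]
    · have hm : 1 ≤ m := by omega
      have ihm := ih hm
      have hm0 : (0:ℝ) < m := by exact_mod_cast hm
      have hfact : ((m+1).factorial : ℝ) = (m+1) * m.factorial := by
        push_cast [Nat.factorial_succ]; ring
      have hfp : (0:ℝ) < m.factorial := by exact_mod_cast m.factorial_pos
      rw [hfact, Real.log_mul (by positivity) (by positivity)]
      -- need : (m+1) log(m+1) - (m+1) ≤ log(m+1) + log m!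
      -- i.e. m*(log(m+1) - log m) ≤ 1, from log(1+1/m) ≤ 1/m
      have key : Real.log ((m+1)/m) ≤ ((m:ℝ)+1)/m - 1 :=
        Real.log_le_sub_one_of_pos (by positivity)
      rw [Real.log_div (by positivity) (by positivity)] at key
      have : (m:ℝ) * (Real.log (m+1) - Real.log m) ≤ 1 := by
        have := mul_le_mul_of_nonneg_left key hm0.le
        calc (m:ℝ) * (Real.log (m+1) - Real.log m) ≤ (m:ℝ) * (((m:ℝ)+1)/m - 1) := this
        _ = 1 := by field_simp; ring
      push_cast
      nlinarith [ihm]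

lemma logfact_ub (n : ℕ) (hn : 1 ≤ n) :
    Real.log (n.factorial) ≤ (n:ℝ) * Real.log n - n + Real.log n + 1 := by
  induction n with
  | zero => omega
  | succ m ih =>
    rcases Nat.eq_or_lt_of_le hn with h | h
    · simp [← h]
    · have hm : 1 ≤ m := by omega
      have ihm := ih hm
      have hm0 : (0:ℝ) < m := by exact_mod_cast hm
      have hfact : ((m+1).factorial : ℝ) = (m+1) * m.factorial := by
        push_cast [Nat.factorial_succ]; ring
      rw [hfact, Real.log_mul (by positivity) (by exact_mod_cast m.factorial_pos.ne')]
      -- need: log(m+1) + log m! ≤ (m+1)log(m+1) - (m+1) + log(m+1) + 1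
      -- suffices: m log m + log m + 1 ≤ (m+1) log(m+1), i.e. (m+1) log(1+1/m) ≥ 1
      have key : 1 - ((m:ℝ)/(m+1)) ≤ Real.log (((m:ℝ)+1)/m) := by
        have := Real.one_sub_inv_le_log_of_pos (x := ((m:ℝ)+1)/m) (by positivity)
        have hinv : (((m:ℝ)+1)/m)⁻¹ = (m:ℝ)/(m+1) := by field_simp
        rwa [hinv] at this
      rw [Real.log_div (by positivity) (by positivity)] at key
      have h1 : 1 ≤ ((m:ℝ)+1) * (Real.log (m+1) - Real.log m) := by
        have := mul_le_mul_of_nonneg_left key (by positivity : (0:ℝ) ≤ (m:ℝ)+1)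
        have e : ((m:ℝ)+1) * (1 - ((m:ℝ)/(m+1))) = 1 := by field_simp; ring
        linarith [e ▸ this]
      push_cast
      nlinarith [ihm]

lemma logGamma_ub {x : ℝ} (hx : 2 ≤ x) :
    Real.log (Real.Gamma x) ≤ x * Real.log x - x + Real.log x + 2 := by
  set m := ⌊x⌋₊ with hm
  have hm2 : 2 ≤ m := Nat.le_floor (by exact_mod_cast hx)
  have hmx : (m:ℝ) ≤ x := Nat.floor_le (by linarith)
  have hxm : x < m + 1 := Nat.lt_floor_add_one x
  have hmono := Real.Gamma_strictMonoOn_Ici.monotoneOn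
  have hG : Real.Gamma x ≤ Real.Gamma ((m:ℝ)+1) := by
    apply hmono (by simpa using hx) ?_ hxm.le
    simp only [Set.mem_Ici]
    have : (2:ℝ) ≤ m := by exact_mod_cast hm2
    linarith
  have hGfact : Real.Gamma ((m:ℝ)+1) = m.factorial := Real.Gamma_nat_eq_factorial m
  have hGpos : 0 < Real.Gamma x := Real.Gamma_pos_of_pos (by linarith)
  have h1 : Real.log (Real.Gamma x) ≤ Real.log (m.factorial) := by
    apply Real.log_le_log hGpos (hGfact ▸ hG)
  have h2 := logfact_ub m (by omega)
  have hm1 : (1:ℝ) ≤ m := by exact_mod_cast (by omega : 1 ≤ m)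
  have hlogm : Real.log m ≤ Real.log x := Real.log_le_log (by linarith) hmx
  have hlogm0 : 0 ≤ Real.log m := Real.log_nonneg hm1
  have hml : (m:ℝ) * Real.log m ≤ x * Real.log x := by
    have hlx0 : 0 ≤ Real.log x := le_trans hlogm0 hlogm
    nlinarith
  linarith

lemma logGamma_lb {x : ℝ} (hx : 2 ≤ x) :
    x * Real.log x - x - 2 * Real.log x ≤ Real.log (Real.Gamma x) := by
  set m := ⌊x⌋₊ with hm
  have hm2 : 2 ≤ m := Nat.le_floor (by exact_mod_cast hx)
  have hmx : (m:ℝ) ≤ x := Nat.floor_le (by linarith)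
  have hxm : x < m + 1 := Nat.lt_floor_add_one x
  have hm2' : (2:ℝ) ≤ m := by exact_mod_cast hm2
  have hmono := Real.Gamma_strictMonoOn_Ici.monotoneOn
  have hG : Real.Gamma (m:ℝ) ≤ Real.Gamma x := by
    apply hmono (by simpa using hm2') (by simpa using hx) hmx
  have hGfact : Real.Gamma (m:ℝ) = (m-1).factorial := by
    have : ((m-1:ℕ):ℝ) + 1 = (m:ℝ) := by
      have : (1:ℕ) ≤ m := by omega
      push_cast [Nat.cast_sub this]; ring
    rw [← this, Real.Gamma_nat_eq_factorial]
  have h1 : Real.log ((m-1).factorial) ≤ Real.log (Real.Gamma x) := by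
    apply Real.log_le_log (by positivity) (hGfact ▸ hG)
  have h2 := logfact_lb (m-1) (by omega)
  set y : ℝ := ((m-1:ℕ):ℝ) with hy
  have hy1 : (1:ℝ) ≤ y := by
    have h : (1:ℕ) ≤ m - 1 := by omega
    rw [hy]; exact_mod_cast h
  have hyx : y ≤ x := by
    have : ((m-1:ℕ):ℝ) = (m:ℝ) - 1 := by
      have : (1:ℕ) ≤ m := by omega
      push_cast [Nat.cast_sub this]; ring
    rw [hy, this]; linarith
  have hxy2 : x - y ≤ 2 := by
    have : ((m-1:ℕ):ℝ) = (m:ℝ) - 1 := by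
      have : (1:ℕ) ≤ m := by omega
      push_cast [Nat.cast_sub this]; ring
    rw [hy, this]; linarith
  -- x log x - y log y - (x - y) ≤ 2 log x
  have key : Real.log (x/y) ≤ x/y - 1 := Real.log_le_sub_one_of_pos (by positivity)
  rw [Real.log_div (by positivity) (by positivity)] at key
  have hkey : y * (Real.log x - Real.log y) ≤ x - y := by
    have := mul_le_mul_of_nonneg_left key (by linarith : (0:ℝ) ≤ y)
    calc y * (Real.log x - Real.log y) ≤ y * (x/y - 1) := this
    _ = x - y := by field_simp
  have hlx0 : 0 ≤ Real.log x := Real.log_nonneg (by linarith)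
  nlinarith [h1, h2]

lemma lemC (a b : ℝ) (hb : 0 < b) :
    Tendsto (fun n : ℕ => Real.log (Real.Gamma (a + b*n)) / n - b * Real.log n)
      atTop (nhds (b * Real.log b - b)) := by
  set G : ℕ → ℝ := fun n => (a/n) * Real.log n + (b + a/n) * Real.log (b + a/n) - (b + a/n)
    with hGdef
  have h0 : Tendsto (fun n : ℕ => a/(n:ℝ)) atTop (nhds 0) :=
    tendsto_const_div_atTop_nhds_zero_nat a
  have hlogn : Tendsto (fun n : ℕ => Real.log n / (n:ℝ)) atTop (nhds 0) := by
    have := Real.isLittleO_log_id_atTop.tendsto_div_nhds_zero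
    exact (this.comp tendsto_natCast_atTop_atTop)
  have h1 : Tendsto (fun n : ℕ => (a/(n:ℝ)) * Real.log n) atTop (nhds 0) := by
    have : Tendsto (fun n : ℕ => a * (Real.log n / n)) atTop (nhds (a * 0)) :=
      tendsto_const_nhds.mul hlogn
    simpa [mul_comm, mul_div_assoc, div_mul_eq_mul_div, mul_zero] using this.congr
      (fun n => by ring)
  have h3 : Tendsto (fun n : ℕ => b + a/(n:ℝ)) atTop (nhds b) := by
    simpa using tendsto_const_nhds.add h0
  have h4 : Tendsto (fun n : ℕ => Real.log (b + a/(n:ℝ))) atTop (nhds (Real.log b)) :=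
    ((Real.continuousAt_log hb.ne').tendsto.comp h3)
  have hG : Tendsto G atTop (nhds (b * Real.log b - b)) := by
    have := (h1.add (h3.mul h4)).sub h3
    simpa using this
  have hx : Tendsto (fun n : ℕ => a + b*(n:ℝ)) atTop atTop := by
    apply tendsto_atTop_add_const_left
    exact (tendsto_natCast_atTop_atTop (R := ℝ)).const_mul_atTop hb
  have hx2 : ∀ᶠ n : ℕ in atTop, 2 ≤ a + b*(n:ℝ) := hx.eventually_ge_atTop 2
  have hn1 : ∀ᶠ n : ℕ in atTop, 1 ≤ n := eventually_ge_atTop 1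
  -- error term
  have herr : Tendsto (fun n : ℕ => (2 * Real.log (a + b*n) + 2) / n) atTop (nhds 0) := by
    have hA : Tendsto (fun n : ℕ => Real.log (a + b*n) / (a + b*n)) atTop (nhds 0) :=
      Real.isLittleO_log_id_atTop.tendsto_div_nhds_zero.comp hx
    have hlx : Tendsto (fun n : ℕ => Real.log (a + b*n) / n) atTop (nhds 0) := by
      have hprod : Tendsto (fun n : ℕ => (Real.log (a + b*n) / (a + b*n)) * (b + a/n))
          atTop (nhds (0 * b)) := hA.mul h3
      rw [zero_mul] at hprod
      apply hprod.congr'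
      filter_upwards [hx2, hn1] with n h2n h1n
      have hn0 : (0:ℝ) < n := by exact_mod_cast h1n
      have hx0 : (0:ℝ) < a + b*n := by linarith
      have : b + a/n = (a + b*n)/n := by field_simp; ring
      rw [this]
      field_simp
    have h2n : Tendsto (fun n : ℕ => (2:ℝ) / n) atTop (nhds 0) :=
      tendsto_const_div_atTop_nhds_zero_nat 2
    have h := (hlx.const_mul 2).add h2n
    rw [mul_zero, add_zero] at h
    exact h.congr (fun n => by ring)
  -- squeeze
  have hlow : Tendsto (fun n : ℕ => G n - (2 * Real.log (a + b*n) + 2) / n)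
      atTop (nhds (b * Real.log b - b)) := by simpa using hG.sub herr
  have hupp : Tendsto (fun n : ℕ => G n + (2 * Real.log (a + b*n) + 2) / n)
      atTop (nhds (b * Real.log b - b)) := by simpa using hG.add herr
  apply tendsto_of_tendsto_of_tendsto_of_le_of_le' hlow hupp
  · filter_upwards [hx2, hn1] with n h2n h1n
    have hn0 : (0:ℝ) < n := by exact_mod_cast h1n
    have hx0 : (0:ℝ) < a + b*n := by linarith
    have hlx0 : 0 ≤ Real.log (a + b*n) := Real.log_nonneg (by linarith)
    set x := a + b*n with hxd
    have hid : (x * Real.log x - x)/n - b * Real.log n = G n := by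
      have hbp : (0:ℝ) < b + a/n := by
        have : b + a/n = x/n := by rw [hxd]; field_simp; ring
        rw [this]; positivity
      have hxe : x = n * (b + a/n) := by rw [hxd]; field_simp; ring
      have hlog : Real.log x = Real.log n + Real.log (b + a/n) := by
        rw [hxe, Real.log_mul hn0.ne' hbp.ne']
      rw [hGdef]
      simp only []
      rw [hlog, hxe]
      field_simp
      ring
    have hlb := logGamma_lb h2n
    have hd1 : (x * Real.log x - x - 2*Real.log x)/n ≤ Real.log (Real.Gamma x) / n := by
      gcongr
    have hd2 : (x * Real.log x - x)/n - (2*Real.log x + 2)/n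
        ≤ (x * Real.log x - x - 2*Real.log x)/n := by
      have : (x * Real.log x - x)/n - (2*Real.log x + 2)/n
          = (x * Real.log x - x - 2*Real.log x - 2)/n := by ring
      rw [this]
      exact (div_le_div_iff_of_pos_right hn0).mpr (by linarith)
    linarith [hid, hd1, hd2]
  · filter_upwards [hx2, hn1] with n h2n h1n
    have hn0 : (0:ℝ) < n := by exact_mod_cast h1n
    have hx0 : (0:ℝ) < a + b*n := by linarith
    have hlx0 : 0 ≤ Real.log (a + b*n) := Real.log_nonneg (by linarith)
    set x := a + b*n with hxd
    have hid : (x * Real.log x - x)/n - b * Real.log n = G n := by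
      have hbp : (0:ℝ) < b + a/n := by
        have : b + a/n = x/n := by rw [hxd]; field_simp; ring
        rw [this]; positivity
      have hxe : x = n * (b + a/n) := by rw [hxd]; field_simp; ring
      have hlog : Real.log x = Real.log n + Real.log (b + a/n) := by
        rw [hxe, Real.log_mul hn0.ne' hbp.ne']
      rw [hGdef]
      simp only []
      rw [hlog, hxe]
      field_simp
      ring
    have hub := logGamma_ub h2n
    have hd1 : Real.log (Real.Gamma x) / n ≤ (x * Real.log x - x + Real.log x + 2)/n := by
      gcongr
    have hd2 : (x * Real.log x - x + Real.log x + 2)/n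
        ≤ (x * Real.log x - x)/n + (2*Real.log x + 2)/n := by
      have : (x * Real.log x - x)/n + (2*Real.log x + 2)/n
          = (x * Real.log x - x + 2*Real.log x + 2)/n := by ring
      rw [this]
      exact (div_le_div_iff_of_pos_right hn0).mpr (by linarith)
    linarith [hid, hd1, hd2]

/-- The positive integer moments `m_n` of `𝒳_α = 𝒜_α^{1/(1-α)}` satisfy
`m_n^{1/n}/n → (α+1)^{α/(α-1)} / (e(α-1))` as `n → ∞`. -/
theorem moments_growth_rate
    {α : ℝ} (hα1 : 1 < α) (hα2 : α < 2) :
    Tendsto (fun n : ℕ =>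
        ((α+1) ^ ((n:ℝ)/(1-α)) * Real.Gamma (α/(α+1)) *
            Real.Gamma (1 + (α+1)*(n:ℝ)/(α-1)) /
          (Real.Gamma (α/(α+1) + (n:ℝ)/(α-1)) * Real.Gamma (1 + (n:ℝ)/(α-1)))) ^ ((1:ℝ)/(n:ℝ))
          / (n:ℝ))
      atTop (nhds ((α+1) ^ (α/(α-1)) / (Real.exp 1 * (α-1)))) := by
  have hm1 : (0:ℝ) < α - 1 := by linarith
  have h1mα : (1:ℝ) - α ≠ 0 := by intro h; linarith [h]
  have hp1 : (0:ℝ) < α + 1 := by linarith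
  set γ : ℝ := 1/(α-1) with hγ
  set β : ℝ := (α+1)/(α-1) with hβ
  set c : ℝ := α/(α+1) with hc
  have hγ0 : 0 < γ := by rw [hγ]; positivity
  have hβ0 : 0 < β := by rw [hβ]; positivity
  have hc0 : 0 < c := by rw [hc]; positivity
  have hΓc : 0 < Real.Gamma c := Real.Gamma_pos_of_pos hc0
  set L1 : ℝ := Real.log (α+1) with hL1
  set K : ℝ := 1/(1-α) * L1 with hK
  -- the limit function
  set h : ℕ → ℝ := fun n => K + Real.log (Real.Gamma c)/n
      + (Real.log (Real.Gamma (1 + β*n))/n - β*Real.log n)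
      - (Real.log (Real.Gamma (c + γ*n))/n - γ*Real.log n)
      - (Real.log (Real.Gamma (1 + γ*n))/n - γ*Real.log n) with hh
  set V : ℝ := K + (β*Real.log β - β) - (γ*Real.log γ - γ) - (γ*Real.log γ - γ) with hV
  have h1 := lemC 1 β hβ0
  have h2 := lemC c γ hγ0
  have h3 := lemC 1 γ hγ0
  have hlogc : Tendsto (fun n : ℕ => Real.log (Real.Gamma c)/(n:ℝ)) atTop (nhds 0) :=
    tendsto_const_div_atTop_nhds_zero_nat _
  have hcomb : Tendsto h atTop (nhds V) := by
    have := (((tendsto_const_nhds (x := K)).add hlogc).add h1).sub h2 |>.sub h3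
    rw [hV]
    simpa using this
  have hexp : Tendsto (fun n => Real.exp (h n)) atTop (nhds (Real.exp V)) :=
    (Real.continuous_exp.tendsto V).comp hcomb
  -- value of the limit
  have htpos : 0 < (α+1) ^ (α/(α-1)) / (Real.exp 1 * (α-1)) := by positivity
  have hVlog : V = Real.log ((α+1) ^ (α/(α-1)) / (Real.exp 1 * (α-1))) := by
    rw [Real.log_div (by positivity) (by positivity), Real.log_rpow hp1,
      Real.log_mul (Real.exp_pos 1).ne' (by positivity), Real.log_exp]
    rw [hV, hK, hβ, hγ, hL1, Real.log_div hp1.ne' hm1.ne',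
      Real.log_div one_ne_zero hm1.ne', Real.log_one]
    field_simp
    ring
  rw [hVlog, Real.exp_log htpos] at hexp
  apply hexp.congr'
  filter_upwards [eventually_ge_atTop 1] with n hn1
  have hn0 : (0:ℝ) < n := by exact_mod_cast hn1
  have e1 : 1 + (α+1)*(n:ℝ)/(α-1) = 1 + β*n := by rw [hβ]; ring
  have e2 : α/(α+1) + (n:ℝ)/(α-1) = c + γ*n := by rw [hc, hγ]; ring
  have e3 : 1 + (n:ℝ)/(α-1) = 1 + γ*n := by rw [hγ]; ring
  have hΓ1 : 0 < Real.Gamma (1 + β*n) := Real.Gamma_pos_of_pos (by positivity)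
  have hΓ2 : 0 < Real.Gamma (c + γ*n) := Real.Gamma_pos_of_pos (by positivity)
  have hΓ3 : 0 < Real.Gamma (1 + γ*n) := Real.Gamma_pos_of_pos (by positivity)
  have hrp : 0 < (α+1) ^ ((n:ℝ)/(1-α)) := Real.rpow_pos_of_pos hp1 _
  have hM : 0 < (α+1) ^ ((n:ℝ)/(1-α)) * Real.Gamma c * Real.Gamma (1 + β*n) /
      (Real.Gamma (c + γ*n) * Real.Gamma (1 + γ*n)) := by positivity
  rw [e1, e2, e3]
  rw [Real.rpow_def_of_pos hM]
  have hdiv : Real.exp (Real.log ((α+1) ^ ((n:ℝ)/(1-α)) * Real.Gamma c * Real.Gamma (1 + β*n) /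
      (Real.Gamma (c + γ*n) * Real.Gamma (1 + γ*n))) * ((1:ℝ)/(n:ℝ))) / (n:ℝ)
      = Real.exp (Real.log ((α+1) ^ ((n:ℝ)/(1-α)) * Real.Gamma c * Real.Gamma (1 + β*n) /
      (Real.Gamma (c + γ*n) * Real.Gamma (1 + γ*n))) * ((1:ℝ)/(n:ℝ)) - Real.log n) := by
    rw [Real.exp_sub, Real.exp_log hn0]
  rw [hdiv]
  congr 1
  rw [Real.log_div (by positivity) (by positivity),
    Real.log_mul (by positivity) hΓ1.ne', Real.log_mul hrp.ne' hΓc.ne',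
    Real.log_rpow hp1, Real.log_mul hΓ2.ne' hΓ3.ne']
  have hrel : β = 2*γ + 1 := by rw [hβ, hγ]; field_simp; ring
  show K + Real.log (Real.Gamma c)/n
      + (Real.log (Real.Gamma (1 + β*n))/n - β*Real.log n)
      - (Real.log (Real.Gamma (c + γ*n))/n - γ*Real.log n)
      - (Real.log (Real.Gamma (1 + γ*n))/n - γ*Real.log n) = _
  rw [hrel, hK, hL1]
  field_simp
  ring
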